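/- Let n, m ≥ 1 and let A : ℝ^m → ℝ^n be a linear map of rank r < min(n, m). Then there exist linear subspaces V_1, …, V_{m−r} of ℝ^m with V_1 ∩ … ∩ V_{m−r} = {0} such that for every δ > 0 there exist linear maps A^{(1)}, …, A^{(m−r)} : ℝ^m → ℝ^n with rank A^{(i)} = r + 1, operator norm ‖A^{(i)} − A‖ ≤ δ, and kernel(A^{(i)}) = V_i for each i = 1, …, m−r. -/

import Mathlib

open RealInnerProductSpace

set_option maxHeartbeats 800000 in

/-- Given a linear map `A : ℝ^m → ℝ^n` of rank `r < min n m`, there are subspaces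
`V_1, …, V_{m-r}` of `ℝ^m` intersecting in `{0}` such that for every `δ > 0` there are
linear maps `A⁽ⁱ⁾` of rank `r + 1`, operator-norm distance at most `δ` from `A`,
and kernel exactly `V_i`. -/
theorem rank_one_perturbations_with_prescribed_kernels
    (n m : ℕ) (hn : 1 ≤ n) (hm : 1 ≤ m)
    (A : EuclideanSpace ℝ (Fin m) →L[ℝ] EuclideanSpace ℝ (Fin n)) (r : ℕ)
    (hr : Module.finrank ℝ (LinearMap.range (A : EuclideanSpace ℝ (Fin m) →ₗ[ℝ] EuclideanSpace ℝ (Fin n))) = r) (hlt : r < min n m) :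
    ∃ V : Fin (m - r) → Submodule ℝ (EuclideanSpace ℝ (Fin m)),
      (⨅ i, V i) = ⊥ ∧
      ∀ δ : ℝ, 0 < δ →
        ∃ B : Fin (m - r) → (EuclideanSpace ℝ (Fin m) →L[ℝ] EuclideanSpace ℝ (Fin n)),
          ∀ i, Module.finrank ℝ (LinearMap.range (B i : EuclideanSpace ℝ (Fin m) →ₗ[ℝ] EuclideanSpace ℝ (Fin n))) = r + 1 ∧
            ‖B i - A‖ ≤ δ ∧ LinearMap.ker (B i : EuclideanSpace ℝ (Fin m) →ₗ[ℝ] EuclideanSpace ℝ (Fin n)) = V i := by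
  have hrn : r < n := lt_of_lt_of_le hlt (min_le_left _ _)
  have hrm : r < m := lt_of_lt_of_le hlt (min_le_right _ _)
  set K : Submodule ℝ (EuclideanSpace ℝ (Fin m)) := LinearMap.ker (A : EuclideanSpace ℝ (Fin m) →ₗ[ℝ] EuclideanSpace ℝ (Fin n)) with hK
  have hrank := LinearMap.finrank_range_add_finrank_ker
    (A : EuclideanSpace ℝ (Fin m) →ₗ[ℝ] EuclideanSpace ℝ (Fin n))
  have hKdim : Module.finrank ℝ K = m - r := by
    have hrg : LinearMap.range (A : EuclideanSpace ℝ (Fin m) →ₗ[ℝ] EuclideanSpace ℝ (Fin n))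
        = LinearMap.range (A : EuclideanSpace ℝ (Fin m) →ₗ[ℝ] EuclideanSpace ℝ (Fin n)) := rfl
    have hkr : LinearMap.ker (A : EuclideanSpace ℝ (Fin m) →ₗ[ℝ] EuclideanSpace ℝ (Fin n))
        = K := rfl
    rw [hrg, hkr, finrank_euclideanSpace_fin, hr] at hrank
    omega
  let b : OrthonormalBasis (Fin (m - r)) ℝ K :=
    (stdOrthonormalBasis ℝ K).reindex (finCongr hKdim)
  let e : Fin (m - r) → EuclideanSpace ℝ (Fin m) := fun i => (b i : EuclideanSpace ℝ (Fin m))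
  have heK : ∀ i, e i ∈ K := fun i => (b i).2
  have heA : ∀ i, A (e i) = 0 := fun i => (heK i)
  have he1 : ∀ i, ‖e i‖ = 1 := fun i => b.orthonormal.1 i
  have henorm : ∀ i, ⟪e i, e i⟫ = 1 := by
    intro i
    rw [real_inner_self_eq_norm_sq, he1 i, one_pow]
  have hne : LinearMap.range (A : EuclideanSpace ℝ (Fin m) →ₗ[ℝ] EuclideanSpace ℝ (Fin n)) ≠ ⊤ := by
    intro h
    rw [h, finrank_top, finrank_euclideanSpace_fin] at hr
    omega
  obtain ⟨w, hw⟩ : ∃ w, w ∉ LinearMap.range (A : EuclideanSpace ℝ (Fin m) →ₗ[ℝ] EuclideanSpace ℝ (Fin n)) := by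
    by_contra h
    push_neg at h
    exact hne (Submodule.eq_top_iff'.2 h)
  have hw0 : w ≠ 0 := fun h => hw (h ▸ (LinearMap.range (A : EuclideanSpace ℝ (Fin m) →ₗ[ℝ] EuclideanSpace ℝ (Fin n))).zero_mem)
  refine ⟨fun i => K ⊓ (ℝ ∙ e i)ᗮ, ?_, ?_⟩
  · rw [eq_bot_iff]
    intro x hx
    simp only [Submodule.mem_iInf, Submodule.mem_inf] at hx
    have hxK : x ∈ K := (hx ⟨0, by omega⟩).1
    have hcoord : ∀ i, ⟪e i, x⟫ = 0 := fun i =>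
      Submodule.mem_orthogonal_singleton_iff_inner_right.1 (hx i).2
    have hx0 : (⟨x, hxK⟩ : K) = 0 := by
      apply b.repr.injective
      ext i
      rw [b.repr_apply_apply]
      have h1 : ⟪b i, (⟨x, hxK⟩ : K)⟫ = ⟪e i, x⟫ := rfl
      rw [h1, hcoord i]
      simp
    simpa using congrArg Subtype.val hx0
  · intro δ hδ
    set c : ℝ := δ / ‖w‖ with hc
    have hwn : (0:ℝ) < ‖w‖ := norm_pos_iff.2 hw0
    have hcpos : 0 < c := div_pos hδ hwn
    have hc0 : c ≠ 0 := ne_of_gt hcpos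
    set B : Fin (m - r) → (EuclideanSpace ℝ (Fin m) →L[ℝ] EuclideanSpace ℝ (Fin n)) :=
      fun i => A + c • ((innerSL ℝ (e i)).smulRight w) with hB
    have hBapp : ∀ i x, B i x = A x + (c * ⟪e i, x⟫) • w := by
      intro i x
      simp [hB, mul_smul]
    refine ⟨B, fun i => ⟨?_, ?_, ?_⟩⟩
    · -- rank r + 1
      have hwB : w ∈ LinearMap.range (B i : EuclideanSpace ℝ (Fin m) →ₗ[ℝ] EuclideanSpace ℝ (Fin n)) := by
        have h1 : B i (e i) = c • w := by
          rw [hBapp, heA, henorm]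
          simp
        have h2 : w = c⁻¹ • B i (e i) := by
          rw [h1, smul_smul, inv_mul_cancel₀ hc0, one_smul]
        rw [h2]
        exact Submodule.smul_mem _ _ (LinearMap.mem_range_self _ _)
      have hrange : LinearMap.range (B i : EuclideanSpace ℝ (Fin m) →ₗ[ℝ] EuclideanSpace ℝ (Fin n)) = LinearMap.range (A : EuclideanSpace ℝ (Fin m) →ₗ[ℝ] EuclideanSpace ℝ (Fin n)) ⊔ (ℝ ∙ w) := by
        apply le_antisymm
        · rintro _ ⟨x, rfl⟩
          rw [ContinuousLinearMap.coe_coe, hBapp]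
          exact Submodule.add_mem_sup (LinearMap.mem_range_self _ x)
            (Submodule.smul_mem _ _ (Submodule.mem_span_singleton_self w))
        · rw [sup_le_iff]
          constructor
          · rintro _ ⟨x, rfl⟩
            have h3 : A x = B i x - (c * ⟪e i, x⟫) • w := by rw [hBapp]; abel
            rw [ContinuousLinearMap.coe_coe, h3]
            exact Submodule.sub_mem _ (LinearMap.mem_range_self _ x)
              (Submodule.smul_mem _ _ hwB)
          · rw [Submodule.span_singleton_le_iff_mem]
            exact hwB
      rw [hrange]
      have hinf : LinearMap.range (A : EuclideanSpace ℝ (Fin m) →ₗ[ℝ] EuclideanSpace ℝ (Fin n)) ⊓ (ℝ ∙ w) = ⊥ := by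
        rw [eq_bot_iff]
        rintro x ⟨hx1, hx2⟩
        obtain ⟨a, rfl⟩ := Submodule.mem_span_singleton.1 hx2
        rcases eq_or_ne a 0 with h | h
        · simp [h]
        · exfalso
          apply hw
          have h4 : w = a⁻¹ • (a • w) := by rw [smul_smul, inv_mul_cancel₀ h, one_smul]
          rw [h4]
          exact Submodule.smul_mem _ _ hx1
      have hfr := Submodule.finrank_sup_add_finrank_inf_eq (LinearMap.range (A : EuclideanSpace ℝ (Fin m) →ₗ[ℝ] EuclideanSpace ℝ (Fin n))) (ℝ ∙ w)
      rw [hinf, hr, finrank_span_singleton hw0] at hfr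
      simpa using hfr
    · -- norm bound
      have h5 : B i - A = c • ((innerSL ℝ (e i)).smulRight w) := by
        show A + c • ((innerSL ℝ (e i)).smulRight w) - A = _
        rw [add_sub_cancel_left]
      rw [h5]
      rw [norm_smul c ((innerSL ℝ (e i)).smulRight w)]
      have h1 : ‖(innerSL ℝ (e i)).smulRight w‖ = ‖e i‖ * ‖w‖ := by
        rw [ContinuousLinearMap.norm_smulRight_apply, innerSL_apply_norm]
      have h6 : ‖c‖ = c := abs_of_pos hcpos
      rw [h1, he1 i, one_mul, h6, hc, div_mul_cancel₀ _ (norm_ne_zero_iff.2 hw0)]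
    · -- kernel
      ext x
      simp only [LinearMap.mem_ker, Submodule.mem_inf,
        Submodule.mem_orthogonal_singleton_iff_inner_right]
      constructor
      · intro hx
        rw [ContinuousLinearMap.coe_coe, hBapp] at hx
        have hinner : ⟪e i, x⟫ = 0 := by
          by_contra h
          apply hw
          have hne' : -(c * ⟪e i, x⟫) ≠ 0 := neg_ne_zero.2 (mul_ne_zero hc0 h)
          have hAx : A x = (-(c * ⟪e i, x⟫)) • w := by
            rw [neg_smul, eq_neg_iff_add_eq_zero]
            exact hx
          refine ⟨(-(c * ⟪e i, x⟫))⁻¹ • x, ?_⟩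
          rw [map_smul, ContinuousLinearMap.coe_coe, hAx, smul_smul, inv_mul_cancel₀ hne', one_smul]
        have hAx : A x = 0 := by
          rw [hinner, mul_zero, zero_smul, add_zero] at hx
          exact hx
        exact ⟨hAx, hinner⟩
      · rintro ⟨h1, h2⟩
        rw [ContinuousLinearMap.coe_coe, hBapp, h2, mul_zero, zero_smul, add_zero]
        exact h1
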